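/- The following identity holds: Σ_{n=0}^{∞} Σ_{m=0}^{∞} Σ_{j=0}^{n} (n+m)! / (m! · j! · (m+2n+1−j)!) · 2^{−n} = √(2π) · e² · (Φ(2) − Φ(1)), where Φ is the standard normal cumulative distribution function. -/

import Mathlib

open MeasureTheory

/-- The standard normal cumulative distribution function. -/
noncomputable def gaussCdf (t : ℝ) : ℝ :=
  ∫ s in Set.Iic t, Real.exp (-s ^ 2 / 2) / Real.sqrt (2 * Real.pi)

open MeasureTheory intervalIntegral

lemma beta_nat (b a : ℕ) : ∫ t in (0:ℝ)..1, t ^ a * (1 - t) ^ b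
    = (a.factorial * b.factorial : ℝ) / (a + b + 1).factorial := by
  induction b generalizing a with
  | zero =>
    simp only [pow_zero, mul_one, integral_pow, Nat.factorial_zero, Nat.cast_one,
      Nat.add_zero]
    rw [Nat.factorial_succ]
    push_cast
    rw [one_pow]
    field_simp
    simp
  | succ b ih =>
    have hu : ∀ x ∈ Set.uIcc (0:ℝ) 1, HasDerivAt (fun t : ℝ => t ^ (a+1) / (a+1)) (x ^ a) x := by
      intro x _
      have := (hasDerivAt_pow (a+1) x).div_const ((a:ℝ)+1)
      refine this.congr_deriv ?_
      push_cast
      field_simp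
    have hv : ∀ x ∈ Set.uIcc (0:ℝ) 1, HasDerivAt (fun t : ℝ => (1 - t) ^ (b+1))
        (-(((b:ℝ)+1) * (1 - x) ^ b)) x := by
      intro x _
      have h1 : HasDerivAt (fun t : ℝ => 1 - t) (-1) x := (hasDerivAt_id x).const_sub 1
      have := h1.pow (b+1)
      norm_num at this
      exact this
    have key := integral_mul_deriv_eq_deriv_mul hu hv
      ((continuous_pow a).intervalIntegrable 0 1)
      (((continuous_const.mul ((continuous_const.sub continuous_id).pow b)).neg).intervalIntegrable 0 1)
    -- key : ∫ x in 0..1, x^(a+1)/(a+1) * (-((b+1)*(1-x)^b)) = ... - ∫ x in 0..1, x^a * (1-x)^(b+1)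
    have e1 : (∫ x in (0:ℝ)..1, x ^ (a+1) / (a+1) * (-(((b:ℝ)+1) * (1 - x) ^ b)))
        = (-(((b:ℝ)+1) / ((a:ℝ)+1))) * ∫ x in (0:ℝ)..1, x ^ (a+1) * (1 - x) ^ b := by
      rw [← intervalIntegral.integral_const_mul]
      congr 1 with x
      ring
    rw [e1, ih (a+1)] at key
    have h2 : (∫ x in (0:ℝ)..1, x ^ a * (1 - x) ^ (b+1))
        = (((b:ℝ)+1) / ((a:ℝ)+1)) * ((((a+1).factorial : ℝ) * b.factorial) / ((a + 1 + b + 1).factorial)) := by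
      have := key
      norm_num at this
      linarith [this]
    rw [h2]
    have hab : (a + (b+1) + 1) = (a + 1 + b + 1) := by omega
    rw [hab, Nat.factorial_succ (a), Nat.factorial_succ b]
    push_cast
    have hfac : ((a + 1 + b + 1).factorial : ℝ) ≠ 0 := Nat.cast_ne_zero.mpr (Nat.factorial_ne_zero _)
    field_simp

lemma inner_eq (n m : ℕ) :
    (∑ j ∈ Finset.range (n + 1),
      ((n + m).factorial : ℝ) / (m.factorial * j.factorial * (m + 2 * n + 1 - j).factorial))
    = (∫ t in (0:ℝ)..1, (1 + t) ^ n * (1 - t) ^ (m + n)) / (m.factorial * n.factorial) := by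
  have hI : (∫ t in (0:ℝ)..1, (1 + t) ^ n * (1 - t) ^ (m + n))
      = ∑ j ∈ Finset.range (n + 1),
          (n.choose j : ℝ) * ((j.factorial * (m + n).factorial : ℝ) / (j + (m + n) + 1).factorial) := by
    have hexp : ∀ t : ℝ, (1 + t) ^ n * (1 - t) ^ (m + n)
        = ∑ j ∈ Finset.range (n + 1), (n.choose j : ℝ) * (t ^ j * (1 - t) ^ (m + n)) := by
      intro t
      rw [add_comm (1:ℝ) t, add_pow, Finset.sum_mul]
      refine Finset.sum_congr rfl fun j _ => by ring
    rw [intervalIntegral.integral_congr (g := fun t => ∑ j ∈ Finset.range (n + 1),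
        (n.choose j : ℝ) * (t ^ j * (1 - t) ^ (m + n))) (fun t _ => hexp t)]
    rw [intervalIntegral.integral_finset_sum]
    · refine Finset.sum_congr rfl fun j _ => ?_
      rw [intervalIntegral.integral_const_mul, beta_nat]
    · intro j _
      exact (continuous_const.mul ((continuous_pow j).mul
        ((continuous_const.sub continuous_id).pow (m+n)))).intervalIntegrable 0 1
  rw [hI, Finset.sum_div]
  rw [← Finset.sum_range_reflect (fun j => ((n + m).factorial : ℝ) /
      (m.factorial * j.factorial * (m + 2 * n + 1 - j).factorial)) (n+1)]
  refine Finset.sum_congr rfl fun j hj => ?_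
  have hjn : j ≤ n := Nat.lt_succ_iff.mp (Finset.mem_range.mp hj)
  have h1 : n + 1 - 1 - j = n - j := by omega
  have h2 : m + 2 * n + 1 - (n - j) = j + (m + n) + 1 := by omega
  rw [h1, h2]
  have hc : ((n.choose j : ℝ)) * j.factorial * (n - j).factorial = n.factorial := by
    exact_mod_cast congrArg (Nat.cast : ℕ → ℝ) (Nat.choose_mul_factorial_mul_factorial hjn)
  have hnm : ((n + m).factorial : ℝ) = ((m + n).factorial : ℝ) := by rw [add_comm]
  have f1 : (m.factorial : ℝ) ≠ 0 := Nat.cast_ne_zero.mpr (Nat.factorial_ne_zero _)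
  have f2 : ((n - j).factorial : ℝ) ≠ 0 := Nat.cast_ne_zero.mpr (Nat.factorial_ne_zero _)
  have f3 : ((j + (m + n) + 1).factorial : ℝ) ≠ 0 := Nat.cast_ne_zero.mpr (Nat.factorial_ne_zero _)
  have f4 : (n.factorial : ℝ) ≠ 0 := Nat.cast_ne_zero.mpr (Nat.factorial_ne_zero _)
  have f5 : (j.factorial : ℝ) ≠ 0 := Nat.cast_ne_zero.mpr (Nat.factorial_ne_zero _)
  rw [hnm]
  field_simp
  linear_combination (-1 : ℝ) * hc

private lemma exp_tsum' (x : ℝ) : Real.exp x = ∑' m : ℕ, x ^ m / m.factorial := by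
  rw [Real.exp_eq_exp_ℝ, NormedSpace.exp_eq_tsum_div]

private lemma fact_ne (k : ℕ) : (k.factorial : ℝ) ≠ 0 :=
  Nat.cast_ne_zero.mpr (Nat.factorial_ne_zero _)

/-- integrand -/
private noncomputable def F (n m : ℕ) (t : ℝ) : ℝ :=
  (1 + t) ^ n * (1 - t) ^ (m + n) / (m.factorial * n.factorial * 2 ^ n)

private lemma F_cont (n m : ℕ) : Continuous (F n m) := by
  unfold F; fun_prop

private lemma F_bound (n m : ℕ) {x : ℝ} (hx : x ∈ Set.Ioc (0:ℝ) 1) :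
    ‖F n m x‖ ≤ 1 / (m.factorial * n.factorial) := by
  have h0 : (0:ℝ) ≤ 1 - x := by linarith [hx.2]
  have h0' : (0:ℝ) ≤ 1 + x := by linarith [hx.1.le]
  have h1 : (1 + x) ^ n ≤ 2 ^ n := pow_le_pow_left₀ h0' (by linarith [hx.2]) n
  have h2 : (1 - x) ^ (m + n) ≤ 1 := pow_le_one₀ h0 (by linarith [hx.1])
  have hnum : (1 + x) ^ n * (1 - x) ^ (m + n) ≤ 2 ^ n := by
    calc (1 + x) ^ n * (1 - x) ^ (m + n) ≤ 2 ^ n * 1 :=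
      mul_le_mul h1 h2 (pow_nonneg h0 _) (by positivity)
    _ = 2 ^ n := mul_one _
  have hD : (0:ℝ) < m.factorial * n.factorial * 2 ^ n := by positivity
  rw [Real.norm_of_nonneg (by unfold F; positivity)]
  unfold F
  calc (1 + x) ^ n * (1 - x) ^ (m + n) / (m.factorial * n.factorial * 2 ^ n)
      ≤ 2 ^ n / (m.factorial * n.factorial * 2 ^ n) := by gcongr
    _ = 1 / (m.factorial * n.factorial) := by
        field_simp

private lemma summable_fact_mul (c : ℝ) : Summable (fun m : ℕ => 1 / (m.factorial * c)) := by
  have : (fun m : ℕ => 1 / ((m.factorial : ℝ) * c)) = fun m => (1/c) * ((1:ℝ)^m / m.factorial) := by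
    funext m; rw [one_pow]; field_simp
  rw [this]
  exact (Real.summable_pow_div_factorial 1).mul_left _

private lemma F_tsum (n : ℕ) (t : ℝ) :
    ∑' m : ℕ, F n m t = ((1 + t) * (1 - t) / 2) ^ n / n.factorial * Real.exp (1 - t) := by
  have : ∀ m : ℕ, F n m t
      = ((1 + t) ^ n * (1 - t) ^ n / (n.factorial * 2 ^ n)) * ((1 - t) ^ m / m.factorial) := by
    intro m
    unfold F
    rw [pow_add]
    field_simp
  rw [tsum_congr this, tsum_mul_left, ← exp_tsum']
  congr 1
  rw [div_pow, mul_pow]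
  field_simp

private lemma step_D (n : ℕ) :
    ∑' m : ℕ, ∫ t in Set.Ioc (0:ℝ) 1, F n m t
      = ∫ t in Set.Ioc (0:ℝ) 1, ((1 + t) * (1 - t) / 2) ^ n / n.factorial * Real.exp (1 - t) := by
  have hint : ∀ m : ℕ, Integrable (F n m) (volume.restrict (Set.Ioc (0:ℝ) 1)) :=
    fun m => (F_cont n m).integrableOn_Ioc
  have hbound : ∀ m : ℕ, (∫ t in Set.Ioc (0:ℝ) 1, ‖F n m t‖) ≤ 1 / (m.factorial * n.factorial) := by
    intro m
    have h1 : (∫ t in Set.Ioc (0:ℝ) 1, ‖F n m t‖)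
        = ‖∫ t in Set.Ioc (0:ℝ) 1, ‖F n m t‖‖ :=
      (Real.norm_of_nonneg (integral_nonneg fun t => norm_nonneg _)).symm
    rw [h1]
    have := norm_setIntegral_le_of_norm_le_const (μ := volume) (s := Set.Ioc (0:ℝ) 1)
      (C := 1 / (m.factorial * n.factorial)) (f := fun t => ‖F n m t‖) (by simp)
      (fun x hx => by rw [norm_norm]; exact F_bound n m hx)
    simpa using this
  have hsum : Summable (fun m : ℕ => ∫ t in Set.Ioc (0:ℝ) 1, ‖F n m t‖) := by
    refine Summable.of_nonneg_of_le (fun m => integral_nonneg fun t => norm_nonneg _)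
      hbound (summable_fact_mul _)
  rw [MeasureTheory.integral_tsum_of_summable_integral_norm hint hsum]
  exact setIntegral_congr_fun (by simp) fun t _ => F_tsum n t

private noncomputable def G (n : ℕ) (t : ℝ) : ℝ :=
  ((1 + t) * (1 - t) / 2) ^ n / n.factorial * Real.exp (1 - t)

private lemma G_cont (n : ℕ) : Continuous (G n) := by
  unfold G; fun_prop

private lemma G_bound (n : ℕ) {x : ℝ} (hx : x ∈ Set.Ioc (0:ℝ) 1) :
    ‖G n x‖ ≤ Real.exp 1 / n.factorial := by
  have h0 : (0:ℝ) ≤ 1 - x := by linarith [hx.2]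
  have h0' : (0:ℝ) ≤ 1 + x := by linarith [hx.1.le]
  have hb : (0:ℝ) ≤ (1 + x) * (1 - x) / 2 := by positivity
  have hb2 : (1 + x) * (1 - x) / 2 ≤ 1 := by nlinarith [hx.1, hx.2]
  have h1 : ((1 + x) * (1 - x) / 2) ^ n ≤ 1 := pow_le_one₀ hb hb2
  have h2 : Real.exp (1 - x) ≤ Real.exp 1 := Real.exp_le_exp.mpr (by linarith [hx.1])
  rw [Real.norm_of_nonneg (by unfold G; positivity)]
  unfold G
  calc ((1 + x) * (1 - x) / 2) ^ n / n.factorial * Real.exp (1 - x)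
      ≤ 1 / n.factorial * Real.exp 1 := by
        apply mul_le_mul (by gcongr) h2 (Real.exp_nonneg _) (by positivity)
    _ = Real.exp 1 / n.factorial := by ring

private lemma step_E :
    ∑' n : ℕ, ∫ t in Set.Ioc (0:ℝ) 1, G n t
      = ∫ t in Set.Ioc (0:ℝ) 1, Real.exp 2 * Real.exp (-(t + 1) ^ 2 / 2) := by
  have hint : ∀ n : ℕ, Integrable (G n) (volume.restrict (Set.Ioc (0:ℝ) 1)) :=
    fun n => (G_cont n).integrableOn_Ioc
  have hbound : ∀ n : ℕ, (∫ t in Set.Ioc (0:ℝ) 1, ‖G n t‖) ≤ Real.exp 1 / n.factorial := by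
    intro n
    have h1 : (∫ t in Set.Ioc (0:ℝ) 1, ‖G n t‖) = ‖∫ t in Set.Ioc (0:ℝ) 1, ‖G n t‖‖ :=
      (Real.norm_of_nonneg (integral_nonneg fun t => norm_nonneg _)).symm
    rw [h1]
    have := norm_setIntegral_le_of_norm_le_const (μ := volume) (s := Set.Ioc (0:ℝ) 1)
      (C := Real.exp 1 / n.factorial) (f := fun t => ‖G n t‖) (by simp)
      (fun x hx => by rw [norm_norm]; exact G_bound n hx)
    simpa using this
  have hsum : Summable (fun n : ℕ => ∫ t in Set.Ioc (0:ℝ) 1, ‖G n t‖) := by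
    refine Summable.of_nonneg_of_le (fun n => integral_nonneg fun t => norm_nonneg _)
      hbound ?_
    have : (fun n : ℕ => Real.exp 1 / (n.factorial : ℝ))
        = fun n => Real.exp 1 * ((1:ℝ) ^ n / n.factorial) := by
      funext n; rw [one_pow]; ring
    rw [this]
    exact (Real.summable_pow_div_factorial 1).mul_left _
  rw [MeasureTheory.integral_tsum_of_summable_integral_norm hint hsum]
  refine setIntegral_congr_fun (by simp) fun t _ => ?_
  have : ∀ n : ℕ, G n t = (((1 + t) * (1 - t) / 2) ^ n / n.factorial) * Real.exp (1 - t) :=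
    fun n => rfl
  rw [tsum_congr this, tsum_mul_right, ← exp_tsum', ← Real.exp_add]
  rw [show Real.exp 2 * Real.exp (-(t + 1) ^ 2 / 2) = Real.exp (2 + -(t + 1) ^ 2 / 2) from
    (Real.exp_add _ _).symm]
  congr 1
  ring

private lemma rhs_eq :
    Real.sqrt (2 * Real.pi) * Real.exp 2 * (gaussCdf 2 - gaussCdf 1)
      = ∫ t in Set.Ioc (0:ℝ) 1, Real.exp 2 * Real.exp (-(t + 1) ^ 2 / 2) := by
  have hsqrt : Real.sqrt (2 * Real.pi) ≠ 0 := by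
    positivity
  have hg : Integrable (fun s : ℝ => Real.exp (-s ^ 2 / 2) / Real.sqrt (2 * Real.pi)) := by
    have h : Integrable fun s : ℝ => Real.exp (-(1/2 : ℝ) * s ^ 2) :=
      integrable_exp_neg_mul_sq (by norm_num)
    have heq : (fun s : ℝ => Real.exp (-s ^ 2 / 2) / Real.sqrt (2 * Real.pi))
        = fun s => Real.exp (-(1/2 : ℝ) * s ^ 2) / Real.sqrt (2 * Real.pi) := by
      funext s; rw [show -s ^ 2 / 2 = -(1/2 : ℝ) * s ^ 2 by ring]
    rw [heq]
    exact h.div_const _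
  have h1 : gaussCdf 2 - gaussCdf 1
      = ∫ s in (1:ℝ)..2, Real.exp (-s ^ 2 / 2) / Real.sqrt (2 * Real.pi) := by
    unfold gaussCdf
    exact (integral_Iic_sub_Iic (μ := volume)
      (f := fun s : ℝ => Real.exp (-s ^ 2 / 2) / Real.sqrt (2 * Real.pi)) (a := (1:ℝ)) (b := 2)
      hg.integrableOn hg.integrableOn)
  rw [h1, intervalIntegral.integral_div]
  have h2 : Real.sqrt (2 * Real.pi) * Real.exp 2 *
      ((∫ s in (1:ℝ)..2, Real.exp (-s ^ 2 / 2)) / Real.sqrt (2 * Real.pi))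
      = Real.exp 2 * ∫ s in (1:ℝ)..2, Real.exp (-s ^ 2 / 2) := by
    field_simp
  rw [h2]
  have h3 : (∫ t in (0:ℝ)..1, Real.exp (-(t + 1) ^ 2 / 2))
      = ∫ s in (1:ℝ)..2, Real.exp (-s ^ 2 / 2) := by
    have := intervalIntegral.integral_comp_add_right
      (a := (0:ℝ)) (b := 1) (fun s : ℝ => Real.exp (-s ^ 2 / 2)) 1
    norm_num at this
    exact this
  rw [← h3, ← intervalIntegral.integral_const_mul,
    intervalIntegral.integral_of_le (zero_le_one : (0:ℝ) ≤ 1)]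

/-- The identity
`Σ_{n=0}^∞ Σ_{m=0}^∞ Σ_{j=0}^n (n+m)!/(m!·j!·(m+2n+1−j)!)·2^{−n} = √(2π)·e²·(Φ(2) − Φ(1))`. -/
theorem triple_sum_identity :
    ∑' n : ℕ, ∑' m : ℕ,
        (∑ j ∈ Finset.range (n + 1),
          ((n + m).factorial : ℝ) /
            (m.factorial * j.factorial * (m + 2 * n + 1 - j).factorial)) * ((2 : ℝ) ^ n)⁻¹ =
      Real.sqrt (2 * Real.pi) * Real.exp 2 * (gaussCdf 2 - gaussCdf 1) := by
  have hterm : ∀ n m : ℕ,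
      (∑ j ∈ Finset.range (n + 1),
          ((n + m).factorial : ℝ) /
            (m.factorial * j.factorial * (m + 2 * n + 1 - j).factorial)) * ((2 : ℝ) ^ n)⁻¹
        = ∫ t in Set.Ioc (0:ℝ) 1, F n m t := by
    intro n m
    rw [inner_eq n m, ← intervalIntegral.integral_of_le (zero_le_one : (0:ℝ) ≤ 1)]
    have hF : (∫ t in (0:ℝ)..1, F n m t)
        = (∫ t in (0:ℝ)..1, (1 + t) ^ n * (1 - t) ^ (m + n))
            / (m.factorial * n.factorial * 2 ^ n) := by
      unfold F
      rw [intervalIntegral.integral_div]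
    rw [hF]
    have d1 : ((m.factorial : ℝ) * n.factorial) ≠ 0 := by positivity
    field_simp
  calc ∑' n : ℕ, ∑' m : ℕ,
        (∑ j ∈ Finset.range (n + 1),
          ((n + m).factorial : ℝ) /
            (m.factorial * j.factorial * (m + 2 * n + 1 - j).factorial)) * ((2 : ℝ) ^ n)⁻¹
      = ∑' n : ℕ, ∑' m : ℕ, ∫ t in Set.Ioc (0:ℝ) 1, F n m t :=
        tsum_congr fun n => tsum_congr fun m => hterm n m
    _ = ∑' n : ℕ, ∫ t in Set.Ioc (0:ℝ) 1, G n t := tsum_congr fun n => step_D n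
    _ = ∫ t in Set.Ioc (0:ℝ) 1, Real.exp 2 * Real.exp (-(t + 1) ^ 2 / 2) := step_E
    _ = Real.sqrt (2 * Real.pi) * Real.exp 2 * (gaussCdf 2 - gaussCdf 1) := rhs_eq.symm
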